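/- arXiv:math/9505216 — 4 statements merged into one kernel-verified Lean document; each statement's English description precedes it below -/
import Mathlib

section
/- Let A be a set of size 2n (n ≥ 1) with distinguished elements x_1, …, x_n ∈ A. For each i with 0 ≤ i < n, the number of unordered pairs {H_0, H_1} of distinct (n+i)-element subsets of A, each containing {x_1,…,x_i}, with H_0 ∪ H_1 = A, is at least (1/2)·C(2n−i, n)·C(n, i). Moreover, pairs arising from different values of i are distinct, so the total number of such unordered covering pairs over all 0 ≤ i < n is at least T_n = (1/2)·∑_{i=1}^{n} C(n+i,n)·C(n,i). -/
/-- `T n = (1/2) ∑_{i=1}^n C(n+i,n) C(n,i)` (the sum is even, so natural division is exact). -/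
def T (n : ℕ) : ℕ := (∑ i ∈ Finset.Icc 1 n, (n + i).choose n * n.choose i) / 2

open Finset

lemma construction {α : Type*} [DecidableEq α] (n i : ℕ) (hi : i < n)
    (A X : Finset α) (hA : A.card = 2 * n) (hX : X ⊆ A) (hXc : X.card = i) :
    ∃ F : Finset (Finset (Finset α)),
      (∀ P ∈ F, P.card = 2 ∧ ∃ H0 ∈ P, ∃ H1 ∈ P, H0 ≠ H1 ∧
        H0 ∪ H1 = A ∧ H0.card = n + i ∧ H1.card = n + i ∧ X ⊆ H0 ∧ X ⊆ H1) ∧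
      (2 * n - i).choose n * n.choose i ≤ 2 * F.card := by
  have hin : i ≤ n := hi.le
  set D : Finset ((_ : Finset α) × Finset α) :=
    ((A \ X).powersetCard n).sigma (fun K => K.powersetCard i) with hD
  set f : ((_ : Finset α) × Finset α) → Finset (Finset α) :=
    fun p => {X ∪ p.1, (A \ (X ∪ p.1)) ∪ X ∪ p.2} with hf
  -- basic facts about members of D
  have hmem : ∀ p ∈ D, p.1 ⊆ A \ X ∧ p.1.card = n ∧ p.2 ⊆ p.1 ∧ p.2.card = i := by
    intro p hp
    rw [hD, Finset.mem_sigma, mem_powersetCard, mem_powersetCard] at hp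
    exact ⟨hp.1.1, hp.1.2, hp.2.1, hp.2.2⟩
  have key : ∀ p ∈ D,
      (X ∪ p.1).card = n + i ∧ ((A \ (X ∪ p.1)) ∪ X ∪ p.2).card = n + i ∧
      X ∪ p.1 ≠ (A \ (X ∪ p.1)) ∪ X ∪ p.2 ∧
      (X ∪ p.1) ∪ ((A \ (X ∪ p.1)) ∪ X ∪ p.2) = A ∧
      X ⊆ X ∪ p.1 ∧ X ⊆ (A \ (X ∪ p.1)) ∪ X ∪ p.2 := by
    intro p hp
    obtain ⟨hK, hKc, hS, hSc⟩ := hmem p hp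
    set K := p.1; set S := p.2
    have hKA : K ⊆ A := hK.trans (sdiff_subset)
    have hdXK : Disjoint X K := by
      exact Finset.disjoint_left.2 fun a ha hb => (Finset.mem_sdiff.1 (hK hb)).2 ha
    have hH0A : X ∪ K ⊆ A := union_subset hX hKA
    have hH0c : (X ∪ K).card = n + i := by
      rw [card_union_of_disjoint hdXK, hXc, hKc]; omega
    have hcompl : (A \ (X ∪ K)).card = n - i := by
      rw [card_sdiff_of_subset hH0A, hA, hH0c]; omega
    have hdX : Disjoint X (A \ (X ∪ K)) := by
      exact Finset.disjoint_left.2 fun a ha hb => (Finset.mem_sdiff.1 hb).2 (mem_union_left _ ha)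
    have hdS : Disjoint S (A \ (X ∪ K)) := by
      exact Finset.disjoint_left.2 fun a ha hb =>
        (Finset.mem_sdiff.1 hb).2 (mem_union_right _ (hS ha))
    have hdSX : Disjoint S X := by
      exact Finset.disjoint_left.2 fun a ha hb =>
        (Finset.mem_sdiff.1 (hK (hS ha))).2 hb
    have hH1c : ((A \ (X ∪ K)) ∪ X ∪ S).card = n + i := by
      rw [union_assoc, union_comm X S, ← union_assoc,
        card_union_of_disjoint, card_union_of_disjoint hdS.symm, hcompl, hXc, hSc]
      · omega
      · exact Finset.disjoint_union_left.2 ⟨hdX.symm, hdSX⟩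
    have hne : X ∪ K ≠ (A \ (X ∪ K)) ∪ X ∪ S := by
      have : (A \ (X ∪ K)).Nonempty := by
        rw [← card_pos, hcompl]; omega
      obtain ⟨a, ha⟩ := this
      intro h
      have : a ∈ X ∪ K := h ▸ (mem_union_left _ (mem_union_left _ ha))
      exact (Finset.mem_sdiff.1 ha).2 this
    have hunion : (X ∪ K) ∪ ((A \ (X ∪ K)) ∪ X ∪ S) = A := by
      apply Finset.Subset.antisymm
      · refine union_subset hH0A (union_subset (union_subset sdiff_subset hX) ((hS.trans hK).trans sdiff_subset))
      · intro a ha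
        by_cases h : a ∈ X ∪ K
        · exact mem_union_left _ h
        · exact mem_union_right _ (mem_union_left _ (mem_union_left _ (Finset.mem_sdiff.2 ⟨ha, h⟩)))
    exact ⟨hH0c, hH1c, hne, hunion, subset_union_left,
      fun a ha => mem_union_left _ (mem_union_right _ ha)⟩
  refine ⟨D.image f, ?_, ?_⟩
  · intro P hP
    obtain ⟨p, hp, rfl⟩ := Finset.mem_image.1 hP
    obtain ⟨h0c, h1c, hne, hun, hX0, hX1⟩ := key p hp
    have hmemH0 : X ∪ p.1 ∈ f p := mem_insert_self _ _
    have hmemH1 : (A \ (X ∪ p.1)) ∪ X ∪ p.2 ∈ f p :=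
      mem_insert_of_mem (mem_singleton_self _)
    refine ⟨?_, _, hmemH0, _, hmemH1, hne, hun, h0c, h1c, hX0, hX1⟩
    rw [hf]
    rw [card_insert_of_notMem (by simpa using hne), card_singleton]
  · have hDcard : D.card = (2 * n - i).choose n * n.choose i := by
      rw [hD, Finset.card_sigma]
      have : ∀ K ∈ (A \ X).powersetCard n, (K.powersetCard i).card = n.choose i := by
        intro K hK
        rw [card_powersetCard, (mem_powersetCard.1 hK).2]
      rw [Finset.sum_congr rfl this, Finset.sum_const, card_powersetCard,
        card_sdiff_of_subset hX, hA, hXc, smul_eq_mul]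
    have hfiber : ∀ P ∈ D.image f, (D.filter fun p => f p = P).card ≤ 2 := by
      intro P hP
      obtain ⟨p0, hp0, rfl⟩ := Finset.mem_image.1 hP
      have hP2 : (f p0).card = 2 := by
        rw [hf, card_insert_of_notMem (by simpa using (key p0 hp0).2.2.1), card_singleton]
      rw [← hP2]
      apply Finset.card_le_card_of_injOn (fun p => X ∪ p.1)
      · intro p hp
        rw [Finset.mem_coe, Finset.mem_filter] at hp
        rw [← hp.2]
        exact mem_insert_self _ _
      · intro p hp q hq hpq
        simp only [Finset.coe_filter, Set.mem_setOf_eq] at hp hq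
        have hdp : Disjoint X p.1 := Finset.disjoint_left.2 fun a ha hb =>
          (Finset.mem_sdiff.1 ((hmem p hp.1).1 hb)).2 ha
        have hdq : Disjoint X q.1 := Finset.disjoint_left.2 fun a ha hb =>
          (Finset.mem_sdiff.1 ((hmem q hq.1).1 hb)).2 ha
        have hpq' : X ∪ p.1 = X ∪ q.1 := hpq
        have h1 : p.1 = q.1 := by
          rw [← union_sdiff_cancel_left hdp, ← union_sdiff_cancel_left hdq, hpq']
        have hfpq : f p = f q := hp.2.trans hq.2.symm
        have hH1 : (A \ (X ∪ p.1)) ∪ X ∪ p.2 = (A \ (X ∪ q.1)) ∪ X ∪ q.2 := by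
          have hne := (key p hp.1).2.2.1
          have hm : (A \ (X ∪ p.1)) ∪ X ∪ p.2 ∈ f q := by
            rw [← hfpq, hf]; exact mem_insert_of_mem (mem_singleton_self _)
          rw [hf] at hm
          rcases Finset.mem_insert.1 hm with h | h
          · exact absurd (h.trans (by rw [h1])) hne.symm
          · exact Finset.mem_singleton.1 h
        have key2 : ∀ r ∈ D, ((A \ (X ∪ r.1)) ∪ X ∪ r.2) ∩ r.1 = r.2 := by
          intro r hr
          obtain ⟨hK, _, hS, _⟩ := hmem r hr
          ext a
          simp only [Finset.mem_inter, Finset.mem_union, Finset.mem_sdiff]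
          constructor
          · rintro ⟨(⟨haA, hnot⟩ | haX) | haS, haK⟩
            · exact absurd (Or.inr haK) hnot
            · exact absurd haX (Finset.mem_sdiff.1 (hK haK)).2
            · exact haS
          · intro haS
            exact ⟨Or.inr haS, hS haS⟩
        have h2 : p.2 = q.2 := by
          rw [← key2 p hp.1, ← key2 q hq.1, hH1, h1]
        exact Sigma.ext h1 (heq_of_eq h2)
    have := Finset.card_le_mul_card_image (f := f) D 2 hfiber
    omega

theorem stmt_3 {α : Type*} [DecidableEq α] (n : ℕ) (hn : 1 ≤ n)
    (A : Finset α) (hA : A.card = 2 * n)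
    (x : Fin n → α) (hxinj : Function.Injective x) (hxA : ∀ j, x j ∈ A) :
    (∀ i < n,
      {P : Finset (Finset α) | P.card = 2 ∧ ∃ H0 ∈ P, ∃ H1 ∈ P, H0 ≠ H1 ∧
          H0 ∪ H1 = A ∧ H0.card = n + i ∧ H1.card = n + i ∧
          ∀ j : Fin n, (j : ℕ) < i → x j ∈ H0 ∩ H1}.ncard ≥
        ((2 * n - i).choose n * n.choose i) / 2) ∧
    {P : Finset (Finset α) | ∃ i < n, P.card = 2 ∧ ∃ H0 ∈ P, ∃ H1 ∈ P, H0 ≠ H1 ∧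
        H0 ∪ H1 = A ∧ H0.card = n + i ∧ H1.card = n + i ∧
        ∀ j : Fin n, (j : ℕ) < i → x j ∈ H0 ∩ H1}.ncard ≥ T n := by
  classical
  set X : ℕ → Finset α := fun i => (Finset.univ.filter fun j : Fin n => (j : ℕ) < i).image x
    with hXdef
  have hXsub : ∀ i, X i ⊆ A := by
    intro i a ha
    obtain ⟨j, _, rfl⟩ := Finset.mem_image.1 ha
    exact hxA j
  have hXcard : ∀ i, i < n → (X i).card = i := by
    intro i hi
    rw [hXdef]
    rw [Finset.card_image_of_injective _ hxinj]
    have : (Finset.univ.filter fun j : Fin n => (j : ℕ) < i) = Finset.Iio (⟨i, hi⟩ : Fin n) := by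
      ext j; simp [Fin.lt_def]
    rw [this, Fin.card_Iio]
  have hxmem : ∀ i, ∀ j : Fin n, (j : ℕ) < i → x j ∈ X i := by
    intro i j hj
    exact Finset.mem_image.2 ⟨j, Finset.mem_filter.2 ⟨Finset.mem_univ _, hj⟩, rfl⟩
  -- finiteness helper
  have hfin : ∀ S : Set (Finset (Finset α)),
      (∀ P ∈ S, ∃ H0 ∈ P, ∃ H1 ∈ P, H0 ≠ H1 ∧ H0 ∪ H1 = A ∧ P.card = 2) → S.Finite := by
    intro S hS
    apply Set.Finite.subset (A.powerset.powerset : Finset _).finite_toSet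
    intro P hP
    obtain ⟨H0, h0, H1, h1, hne, hun, hc⟩ := hS P hP
    have hsub : {H0, H1} ⊆ P := by
      intro H hH
      rcases Finset.mem_insert.1 hH with rfl | hH
      · exact h0
      · exact (Finset.mem_singleton.1 hH) ▸ h1
    have h2 : ({H0, H1} : Finset (Finset α)).card = 2 := by
      rw [Finset.card_insert_of_notMem (by simpa using hne), Finset.card_singleton]
    have hPeq : ({H0, H1} : Finset (Finset α)) = P :=
      Finset.eq_of_subset_of_card_le hsub (by omega)
    simp only [Finset.coe_powerset, Set.mem_preimage, Set.mem_powerset_iff,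
      Finset.coe_powerset]
    intro H hH
    rw [← hPeq] at hH
    simp only [Finset.coe_insert, Set.mem_insert_iff, Finset.coe_singleton,
      Set.mem_singleton_iff] at hH
    rcases hH with rfl | rfl
    · intro a ha; rw [← hun]; exact Finset.mem_union_left _ ha
    · intro a ha; rw [← hun]; exact Finset.mem_union_right _ ha
  -- per-i family
  have hex : ∀ i, ∃ F : Finset (Finset (Finset α)), i < n →
      ((∀ P ∈ F, P.card = 2 ∧ ∃ H0 ∈ P, ∃ H1 ∈ P, H0 ≠ H1 ∧
        H0 ∪ H1 = A ∧ H0.card = n + i ∧ H1.card = n + i ∧ X i ⊆ H0 ∧ X i ⊆ H1) ∧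
      (2 * n - i).choose n * n.choose i ≤ 2 * F.card) := by
    intro i
    by_cases hi : i < n
    · obtain ⟨F, hF⟩ := construction n i hi A (X i) hA (hXsub i) (hXcard i hi)
      exact ⟨F, fun _ => hF⟩
    · exact ⟨∅, fun h => absurd h hi⟩
  choose F hF using hex
  -- the F i are subsets of the per-i target sets
  have hFsub : ∀ i, i < n → ∀ P ∈ F i, P.card = 2 ∧ ∃ H0 ∈ P, ∃ H1 ∈ P, H0 ≠ H1 ∧
      H0 ∪ H1 = A ∧ H0.card = n + i ∧ H1.card = n + i ∧
      ∀ j : Fin n, (j : ℕ) < i → x j ∈ H0 ∩ H1 := by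
    intro i hi P hP
    obtain ⟨hc, H0, h0, H1, h1, hne, hun, hc0, hc1, hX0, hX1⟩ := ((hF i hi).1 P hP)
    exact ⟨hc, H0, h0, H1, h1, hne, hun, hc0, hc1, fun j hj =>
      Finset.mem_inter.2 ⟨hX0 (hxmem i j hj), hX1 (hxmem i j hj)⟩⟩
  have hallcard : ∀ i, i < n → ∀ P ∈ F i, ∀ H ∈ P, H.card = n + i := by
    intro i hi P hP H hH
    obtain ⟨hc, H0, h0, H1, h1, hne, _, hc0, hc1, _⟩ := hFsub i hi P hP
    have hsub : {H0, H1} ⊆ P := by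
      intro G hG
      rcases Finset.mem_insert.1 hG with rfl | hG
      · exact h0
      · exact (Finset.mem_singleton.1 hG) ▸ h1
    have h2 : ({H0, H1} : Finset (Finset α)).card = 2 := by
      rw [Finset.card_insert_of_notMem (by simpa using hne), Finset.card_singleton]
    have hPeq : ({H0, H1} : Finset (Finset α)) = P :=
      Finset.eq_of_subset_of_card_le hsub (by omega)
    rw [← hPeq] at hH
    rcases Finset.mem_insert.1 hH with rfl | hH
    · exact hc0
    · exact (Finset.mem_singleton.1 hH) ▸ hc1
  constructor
  · intro i hi
    set S := {P : Finset (Finset α) | P.card = 2 ∧ ∃ H0 ∈ P, ∃ H1 ∈ P, H0 ≠ H1 ∧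
          H0 ∪ H1 = A ∧ H0.card = n + i ∧ H1.card = n + i ∧
          ∀ j : Fin n, (j : ℕ) < i → x j ∈ H0 ∩ H1} with hS
    have hsub : (↑(F i) : Set (Finset (Finset α))) ⊆ S := by
      intro P hP
      exact hFsub i hi P (by exact_mod_cast hP)
    have hSfin : S.Finite := by
      apply hfin
      rintro P ⟨hc, H0, h0, H1, h1, hne, hun, _⟩
      exact ⟨H0, h0, H1, h1, hne, hun, hc⟩
    have h1 : (F i).card ≤ S.ncard := by
      rw [← Set.ncard_coe_finset]
      exact Set.ncard_le_ncard hsub hSfin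
    have h2 := (hF i hi).2
    omega
  · set S := {P : Finset (Finset α) | ∃ i < n, P.card = 2 ∧ ∃ H0 ∈ P, ∃ H1 ∈ P, H0 ≠ H1 ∧
        H0 ∪ H1 = A ∧ H0.card = n + i ∧ H1.card = n + i ∧
        ∀ j : Fin n, (j : ℕ) < i → x j ∈ H0 ∩ H1} with hS
    set U : Finset (Finset (Finset α)) := (Finset.range n).biUnion F with hU
    have hdisj : ∀ i ∈ Finset.range n, ∀ j ∈ Finset.range n, i ≠ j →
        Disjoint (F i) (F j) := by
      intro i hi j hj hij
      rw [Finset.disjoint_left]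
      intro P hPi hPj
      obtain ⟨hc, H0, h0, _⟩ := hFsub i (Finset.mem_range.1 hi) P hPi
      have := hallcard i (Finset.mem_range.1 hi) P hPi H0 h0
      have := hallcard j (Finset.mem_range.1 hj) P hPj H0 h0
      omega
    have hUcard : U.card = ∑ i ∈ Finset.range n, (F i).card :=
      Finset.card_biUnion hdisj
    have hsum : ∑ i ∈ Finset.range n, (2 * n - i).choose n * n.choose i ≤ 2 * U.card := by
      rw [hUcard, Finset.mul_sum]
      exact Finset.sum_le_sum fun i hi => (hF i (Finset.mem_range.1 hi)).2
    have hreindex : ∑ i ∈ Finset.range n, (2 * n - i).choose n * n.choose i =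
        ∑ j ∈ Finset.Icc 1 n, (n + j).choose n * n.choose j := by
      apply Finset.sum_nbij' (fun i => n - i) (fun j => n - j)
      · intro i hi
        rw [Finset.mem_range] at hi
        rw [Finset.mem_Icc]; omega
      · intro j hj
        rw [Finset.mem_Icc] at hj
        rw [Finset.mem_range]; omega
      · intro i hi
        rw [Finset.mem_range] at hi; omega
      · intro j hj
        rw [Finset.mem_Icc] at hj; omega
      · intro i hi
        rw [Finset.mem_range] at hi
        have h1 : n + (n - i) = 2 * n - i := by omega
        rw [h1, Nat.choose_symm (by omega : i ≤ n)]
    have hsubU : (↑U : Set (Finset (Finset α))) ⊆ S := by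
      intro P hP
      rw [hU] at hP
      simp only [Finset.coe_biUnion, Set.mem_iUnion, Finset.mem_coe,
        Finset.mem_range] at hP
      obtain ⟨i, hi, hPi⟩ := hP
      have hi' : i < n := by simpa using hi
      exact ⟨i, hi', hFsub i hi' P hPi⟩
    have hSfin : S.Finite := by
      apply hfin
      rintro P ⟨i, hi, hc, H0, h0, H1, h1, hne, hun, _⟩
      exact ⟨H0, h0, H1, h1, hne, hun, hc⟩
    have h1 : U.card ≤ S.ncard := by
      rw [← Set.ncard_coe_finset]
      exact Set.ncard_le_ncard hsubU hSfin
    have hT : T n = (∑ i ∈ Finset.range n, (2 * n - i).choose n * n.choose i) / 2 := by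
      rw [T, hreindex]
    omega
end

section
/- If for every ordinal α < ω_n a bijection φ_α : α → |α| is fixed, and for a finite set x ⊆ ω_n one defines γ_0(x) = max(x) and γ_{i+1}(x) = φ_{γ_0(x)}^{-1}(γ_i(φ_{γ_0(x)}[x ∩ γ_0(x)])) for i+1 < min(n, |x|), then for every s ∈ [ω_n]^{≤n} the set {x ∈ [ω_n]^{<ω} : γ(x) = s} is countable, where γ(x) = {γ_0(x), …, γ_{k−1}(x)} with k = min(n, |x|). -/
open Cardinal Ordinal

lemma filt_max (x : Finset Ordinal) (h : x.Nonempty) :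
    x.filter (fun a => a < x.max' h) = x.erase (x.max' h) := by
  ext a
  simp only [Finset.mem_filter, Finset.mem_erase]
  constructor
  · rintro ⟨hx, hlt⟩; exact ⟨ne_of_lt hlt, hx⟩
  · rintro ⟨hne, hx⟩; exact ⟨hx, lt_of_le_of_ne (Finset.le_max' x a hx) hne⟩

lemma gam_mem (n : ℕ) (φ ψ : Ordinal → Ordinal → Ordinal)
    (hφ : ∀ α : Ordinal, Set.BijOn (φ α) (Set.Iio α) (Set.Iio (α.card).ord))
    (hψ : ∀ α β : Ordinal, β < α → ψ α (φ α β) = β)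
    (gam : ℕ → Finset Ordinal → Ordinal)
    (hgam0 : ∀ (x : Finset Ordinal) (h : x.Nonempty), gam 0 x = x.max' h)
    (hgamS : ∀ (x : Finset Ordinal) (i : ℕ), i + 1 < min n x.card →
        gam (i + 1) x =
          ψ (gam 0 x) (gam i ((x.filter (fun a => a < gam 0 x)).image (φ (gam 0 x))))) :
    ∀ (i : ℕ) (x : Finset Ordinal), i < min n x.card →
      gam i x ∈ x ∧ ∀ (h : x.Nonempty), 0 < i → gam i x < x.max' h := by
  intro i
  induction i with
  | zero =>
    intro x hi
    have hne : x.Nonempty := Finset.card_pos.mp (by omega)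
    rw [hgam0 x hne]
    exact ⟨x.max'_mem hne, fun h h0 => absurd h0 (lt_irrefl 0)⟩
  | succ i ih =>
    intro x hi
    have hne : x.Nonempty := Finset.card_pos.mp (by omega)
    have h0 : gam 0 x = x.max' hne := hgam0 x hne
    set α := x.max' hne with hα
    set y : Finset Ordinal := (x.filter (fun a => a < α)).image (φ α) with hy
    have hrec : gam (i+1) x = ψ α (gam i y) := by
      rw [hgamS x i hi, h0]
    have hfe : x.filter (fun a => a < α) = x.erase α := filt_max x hne
    have hycard : y.card = x.card - 1 := by
      rw [hy, Finset.card_image_of_injOn, hfe, Finset.card_erase_of_mem (x.max'_mem hne)]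
      · exact (hφ α).injOn.mono (fun a ha => (Finset.mem_filter.mp ha).2)
    have hiy : i < min n y.card := by omega
    obtain ⟨hmem, -⟩ := ih y hiy
    rw [hy] at hmem
    obtain ⟨b, hb, hφb⟩ := Finset.mem_image.mp hmem
    rw [Finset.mem_filter] at hb
    have hbα : b < α := hb.2
    have : gam (i+1) x = b := by rw [hrec, ← hφb, hψ α b hbα]
    rw [this]
    exact ⟨hb.1, fun h _ => hbα⟩

lemma key (n : ℕ) (φ ψ : Ordinal → Ordinal → Ordinal)
    (hφ : ∀ α : Ordinal, Set.BijOn (φ α) (Set.Iio α) (Set.Iio (α.card).ord))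
    (hψ : ∀ α β : Ordinal, β < α → ψ α (φ α β) = β)
    (gam : ℕ → Finset Ordinal → Ordinal)
    (hgam0 : ∀ (x : Finset Ordinal) (h : x.Nonempty), gam 0 x = x.max' h) :
    ∀ (hgamS : ∀ (x : Finset Ordinal) (i : ℕ), i + 1 < min n x.card →
        gam (i + 1) x =
          ψ (gam 0 x) (gam i ((x.filter (fun a => a < gam 0 x)).image (φ (gam 0 x)))))
      (s : Finset Ordinal),
    {x : Finset Ordinal | (∀ a ∈ x, a < (aleph n).ord) ∧
        (Finset.range (min n x.card)).image (fun i => gam i x) = s}.Countable := by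
  induction n with
  | zero =>
    intro hgamS s
    rcases eq_or_ne s ∅ with rfl | hs0
    · have hS : (Set.Iio ((aleph (0:ℕ)).ord)).Countable := by
        have hmk : #(Set.Iio ((aleph (0:ℕ)).ord)) = ℵ₀ := by
          rw [Cardinal.mk_Iio_ordinal]; simp
        exact Set.countable_coe_iff.mp (Cardinal.mk_le_aleph0_iff.mp (le_of_eq hmk))
      refine Set.MapsTo.countable_of_injOn (t := {t | t.Finite ∧ t ⊆ Set.Iio ((aleph (0:ℕ)).ord)})
        (f := fun x : Finset Ordinal => (x : Set Ordinal)) ?_ (Finset.coe_injective.injOn)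
        (Set.countable_setOf_finite_subset hS)
      rintro x ⟨hx1, -⟩
      exact ⟨x.finite_toSet, fun a ha => hx1 a ha⟩
    · convert Set.countable_empty
      rw [Set.eq_empty_iff_forall_notMem]
      rintro x ⟨-, hx2⟩
      simp at hx2
      exact hs0 hx2.symm
  | succ n ih =>
    intro hgamS s
    have hgamS' : ∀ (x : Finset Ordinal) (i : ℕ), i + 1 < min n x.card →
        gam (i + 1) x =
          ψ (gam 0 x) (gam i ((x.filter (fun a => a < gam 0 x)).image (φ (gam 0 x)))) := by
      intro x i hi
      exact hgamS x i (by omega)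
    set fiber := {x : Finset Ordinal | (∀ a ∈ x, a < (aleph (n+1:ℕ)).ord) ∧
        (Finset.range (min (n+1) x.card)).image (fun i => gam i x) = s} with hfiber
    rcases eq_or_ne s ∅ with rfl | hs0
    · apply Set.Countable.mono ?_ (Set.countable_singleton (∅ : Finset Ordinal))
      rintro x ⟨-, hx2⟩
      have : min (n+1) x.card = 0 := by
        by_contra h
        have : (0:ℕ) ∈ Finset.range (min (n+1) x.card) := Finset.mem_range.mpr (by omega)
        have := Finset.mem_image_of_mem (fun i => gam i x) this
        rw [hx2] at this
        simp at this
      have : x = ∅ := Finset.card_eq_zero.mp (by omega)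
      simp [this]
    have hsne : s.Nonempty := Finset.nonempty_iff_ne_empty.mpr hs0
    set α := s.max' hsne with hαdef
    -- facts about members of the fiber
    have hxne : ∀ x ∈ fiber, x.Nonempty := by
      rintro x ⟨-, hx2⟩
      have hk : min (n+1) x.card ≠ 0 := by
        intro h
        rw [h] at hx2
        simp at hx2
        exact hs0 hx2.symm
      exact Finset.card_pos.mp (by omega)
    have hmaxeq : ∀ x (hx : x ∈ fiber) (h : x.Nonempty), x.max' h = α := by
      rintro x hx h
      have hx2 := hx.2
      have hk1 : 1 ≤ min (n+1) x.card := by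
        have : 1 ≤ x.card := Finset.card_pos.mpr (hxne x hx)
        omega
      have hg0 : gam 0 x ∈ s := by
        rw [← hx2]
        exact Finset.mem_image_of_mem _ (Finset.mem_range.mpr (by omega))
      have h0 : gam 0 x = x.max' h := hgam0 x h
      apply le_antisymm
      · rw [← h0]; exact Finset.le_max' s _ hg0
      · apply Finset.max'_le
        intro b hb
        rw [← hx2] at hb
        obtain ⟨i, hi, rfl⟩ := Finset.mem_image.mp hb
        rw [Finset.mem_range] at hi
        have := (gam_mem (n+1) φ ψ hφ hψ gam hgam0 hgamS i x hi).1
        exact Finset.le_max' x _ this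
    -- if fiber is empty we are done
    rcases Set.eq_empty_or_nonempty fiber with hfe | ⟨x₀, hx₀⟩
    · rw [hfe]; exact Set.countable_empty
    -- the map F and target s'
    set F : Finset Ordinal → Finset Ordinal := fun x => (x.erase α).image (φ α) with hF
    set s' : Finset Ordinal := (s.erase α).image (φ α) with hs'
    have hαcard : (α.card).ord ≤ (aleph (n:ℕ)).ord := by
      have hα0 : α ∈ s := s.max'_mem hsne
      have hαx : α < (aleph (n+1:ℕ)).ord := by
        obtain ⟨hx1, hx2⟩ := hx₀
        have := hmaxeq x₀ ⟨hx1, hx2⟩ (hxne x₀ ⟨hx1, hx2⟩)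
        rw [← this]
        exact hx1 _ (Finset.max'_mem _ _)
      have : α.card ≤ aleph (n:ℕ) := by
        have := Cardinal.lt_ord.mp hαx
        rw [show ((n+1:ℕ):Ordinal) = Order.succ (n:Ordinal) by exact_mod_cast Nat.cast_succ n,
          aleph_succ] at this
        exact Order.lt_succ_iff.mp this
      exact Cardinal.ord_le_ord.mpr this
    -- erase α stays below α in the fiber
    have herase_lt : ∀ x (hx : x ∈ fiber), ∀ b ∈ x.erase α, b < α := by
      intro x hx b hb
      obtain ⟨hbne, hbx⟩ := Finset.mem_erase.mp hb
      have h := hxne x hx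
      have := Finset.le_max' x b hbx
      rw [hmaxeq x hx h] at this
      exact lt_of_le_of_ne this hbne
    -- the image equality for F x
    have hmain : ∀ x (hx : x ∈ fiber), F x ∈ {y : Finset Ordinal |
        (∀ a ∈ y, a < (aleph (n:ℕ)).ord) ∧
        (Finset.range (min n y.card)).image (fun i => gam i y) = s'} := by
      intro x hx
      have hne := hxne x hx
      have hmax := hmaxeq x hx hne
      obtain ⟨hx1, hx2⟩ := hx
      set k := min (n+1) x.card with hk
      have hk1 : 1 ≤ k := by
        have : 1 ≤ x.card := Finset.card_pos.mpr hne
        omega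
      have h0 : gam 0 x = α := by rw [hgam0 x hne, hmax]
      have hfe : x.filter (fun a => a < α) = x.erase α := by
        rw [← hmax]; exact filt_max x hne
      have hinj : Set.InjOn (φ α) ↑(x.erase α) := by
        apply (hφ α).injOn.mono
        intro b hb
        exact herase_lt x ⟨hx1, hx2⟩ b hb
      have hycard : (F x).card = x.card - 1 := by
        rw [hF]
        simp only
        rw [Finset.card_image_of_injOn hinj, Finset.card_erase_of_mem]
        rw [← hmax]; exact x.max'_mem hne
      constructor
      · -- elements below aleph n
        intro a ha
        obtain ⟨b, hb, rfl⟩ := Finset.mem_image.mp ha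
        have hbα : b < α := herase_lt x ⟨hx1, hx2⟩ b hb
        have := (hφ α).mapsTo hbα
        exact lt_of_lt_of_le this hαcard
      · -- the image equality
        have hky : min n (F x).card = k - 1 := by omega
        -- recursion: for i < k - 1
        have hrec : ∀ i, i < k - 1 → gam (i+1) x = ψ α (gam i (F x)) := by
          intro i hi
          have := hgamS x i (by omega)
          rw [h0, hfe] at this
          exact this
        -- gam i (F x) is in the image of φ α, and φ α (gam (i+1) x) = gam i (F x)
        have hval : ∀ i, i < k - 1 → φ α (gam (i+1) x) = gam i (F x) := by
          intro i hi
          have hiy : i < min (n+1) (F x).card := by omega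
          have hmemy := (gam_mem (n+1) φ ψ hφ hψ gam hgam0 hgamS i (F x) hiy).1
          rw [hF] at hmemy
          obtain ⟨b, hb, hφb⟩ := Finset.mem_image.mp hmemy
          have hbα : b < α := herase_lt x ⟨hx1, hx2⟩ b hb
          rw [hrec i hi, ← hφb, hψ α b hbα, hφb]
        -- s.erase α = image over range (k-1) of gam (i+1) x
        have hserase : s.erase α = (Finset.range (k-1)).image (fun i => gam (i+1) x) := by
          ext a
          simp only [Finset.mem_erase, Finset.mem_image, Finset.mem_range]
          constructor
          · rintro ⟨hane, has⟩
            rw [← hx2] at has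
            obtain ⟨i, hi, rfl⟩ := Finset.mem_image.mp has
            rw [Finset.mem_range] at hi
            rcases i with _ | j
            · exact absurd h0 hane
            · exact ⟨j, by omega, rfl⟩
          · rintro ⟨i, hi, rfl⟩
            have hilt : i + 1 < k := by omega
            have hlt := (gam_mem (n+1) φ ψ hφ hψ gam hgam0 hgamS (i+1) x hilt).2 hne
              (by omega)
            rw [hmax] at hlt
            constructor
            · exact ne_of_lt hlt
            · rw [← hx2]
              exact Finset.mem_image_of_mem _ (Finset.mem_range.mpr hilt)
        rw [hky, hs', hserase, Finset.image_image]
        apply Finset.image_congr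
        intro i hi
        simp only [Finset.mem_coe, Finset.mem_range] at hi
        exact (hval i hi).symm
    -- injectivity of F on the fiber
    have hFinj : Set.InjOn F fiber := by
      have hsub : ∀ x1 (hx1 : x1 ∈ fiber), ∀ x2 (hx2 : x2 ∈ fiber), F x1 = F x2 → x1 ⊆ x2 := by
        intro x1 hx1 x2 hx2 hFeq a ha
        rcases eq_or_ne a α with rfl | hne
        · have := hmaxeq x2 hx2 (hxne x2 hx2)
          rw [← this]; exact Finset.max'_mem _ _
        · have ha' : a ∈ x1.erase α := Finset.mem_erase.mpr ⟨hne, ha⟩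
          have haα : a < α := herase_lt x1 hx1 a ha'
          have : φ α a ∈ F x2 := by
            rw [← hFeq, hF]
            exact Finset.mem_image_of_mem _ ha'
          rw [hF] at this
          obtain ⟨b, hb, hφb⟩ := Finset.mem_image.mp this
          have hbα : b < α := herase_lt x2 hx2 b hb
          have : b = a := (hφ α).injOn hbα haα hφb
          rw [← this]
          exact Finset.mem_of_mem_erase hb
      intro x1 hx1 x2 hx2 hFeq
      exact Finset.Subset.antisymm (hsub x1 hx1 x2 hx2 hFeq) (hsub x2 hx2 x1 hx1 hFeq.symm)
    exact Set.MapsTo.countable_of_injOn hmain hFinj (ih hgamS' s')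


theorem stmt_6 (n : ℕ) (hn : 1 ≤ n)
    (φ ψ : Ordinal → Ordinal → Ordinal)
    -- φ α is a bijection from {β : β < α} onto {β : β < ord |α|}
    (hφ : ∀ α : Ordinal, Set.BijOn (φ α) (Set.Iio α) (Set.Iio (α.card).ord))
    -- ψ α is the inverse bijection φ α ⁻¹
    (hψ : ∀ α β : Ordinal, β < α → ψ α (φ α β) = β)
    (gam : ℕ → Finset Ordinal → Ordinal)
    -- γ₀(x) = max x
    (hgam0 : ∀ (x : Finset Ordinal) (h : x.Nonempty), gam 0 x = x.max' h)
    -- γ_{i+1}(x) = φ_{γ₀(x)}⁻¹ ( γ_i ( φ_{γ₀(x)} [ x ∩ γ₀(x) ] ) )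
    (hgamS : ∀ (x : Finset Ordinal) (i : ℕ), i + 1 < min n x.card →
        gam (i + 1) x =
          ψ (gam 0 x) (gam i ((x.filter (fun a => a < gam 0 x)).image (φ (gam 0 x)))))
    (s : Finset Ordinal) (hs : ∀ a ∈ s, a < (aleph n).ord) (hscard : s.card ≤ n) :
    {x : Finset Ordinal | (∀ a ∈ x, a < (aleph n).ord) ∧
        (Finset.range (min n x.card)).image (fun i => gam i x) = s}.Countable :=
  key n φ ψ hφ hψ gam hgam0 hgamS s
end

section
/- T_n ≥ 2^n − 1 for every n ≥ 1, with equality exactly when n = 1. -/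
theorem stmt_12 (n : ℕ) (hn : 1 ≤ n) :
    2 ^ n - 1 ≤ T n ∧ (T n = 2 ^ n - 1 ↔ n = 1) := by
  have hchoose : ∑ i ∈ Finset.Icc 1 n, n.choose i = 2 ^ n - 1 := by
    have h1 : Finset.range (n + 1) = insert 0 (Finset.Icc 1 n) := by
      ext x; simp only [Finset.mem_range, Finset.mem_insert, Finset.mem_Icc]; omega
    have h2 := Nat.sum_range_choose n
    rw [h1, Finset.sum_insert (by simp)] at h2
    simp only [Nat.choose_zero_right] at h2
    omega
  have hlb : (n + 1) * (2 ^ n - 1) ≤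
      ∑ i ∈ Finset.Icc 1 n, (n + i).choose n * n.choose i := by
    calc (n + 1) * (2 ^ n - 1) = ∑ i ∈ Finset.Icc 1 n, (n + 1) * n.choose i := by
          rw [← Finset.mul_sum, hchoose]
      _ ≤ _ := Finset.sum_le_sum (fun i hi => by
          have hi1 : 1 ≤ i := (Finset.mem_Icc.mp hi).1
          have h3 : (n + 1).choose n ≤ (n + i).choose n :=
            Nat.choose_le_choose n (by omega)
          have h4 : (n + 1).choose n = n + 1 := Nat.choose_succ_self_right n
          exact mul_le_mul_left (h4 ▸ h3) _)
  have hT : (n + 1) * (2 ^ n - 1) / 2 ≤ T n := Nat.div_le_div_right hlb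
  have hm2 : 2 ≤ 2 ^ n := by
    calc 2 = 2 ^ 1 := rfl
      _ ≤ 2 ^ n := Nat.pow_le_pow_right (by norm_num) hn
  have part1 : 2 ^ n - 1 ≤ T n := by
    have h5 : 2 * (2 ^ n - 1) ≤ (n + 1) * (2 ^ n - 1) :=
      Nat.mul_le_mul_right _ (by omega)
    have h6 : 2 ^ n - 1 ≤ (n + 1) * (2 ^ n - 1) / 2 := by
      rw [Nat.le_div_iff_mul_le (by norm_num)]
      omega
    exact h6.trans hT
  refine ⟨part1, ?_, ?_⟩
  · intro heq
    by_contra hne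
    have hn2 : 2 ≤ n := by omega
    have hm4 : 4 ≤ 2 ^ n := by
      calc 4 = 2 ^ 2 := rfl
        _ ≤ 2 ^ n := Nat.pow_le_pow_right (by norm_num) hn2
    have h6 : 3 * (2 ^ n - 1) ≤ (n + 1) * (2 ^ n - 1) :=
      Nat.mul_le_mul_right _ (by omega)
    have h7 : 2 ^ n ≤ (n + 1) * (2 ^ n - 1) / 2 := by
      rw [Nat.le_div_iff_mul_le (by norm_num)]
      omega
    have := h7.trans hT
    omega
  · intro h1
    subst h1
    decide
end

section
/- T_n grows like c·(3+2√2)^n/√n: there exist constants 0 < c_1 < c_2 such that for all sufficiently large n, c_1·(3+2√2)^n/√n ≤ T_n ≤ c_2·(3+2√2)^n/√n. -/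
set_option maxHeartbeats 1600000
set_option linter.unusedTactic false
set_option linter.unreachableTactic false
open Finset


lemma innerSumAux (n a : ℕ) (ha : a ≤ n) :
    ∑ k ∈ range (n+1), n.choose k * k.choose a = n.choose a * 2^(n-a) := by
  have h0 : ∑ k ∈ range (n+1), n.choose k * k.choose a
      = ∑ k ∈ Ico a (n+1), n.choose k * k.choose a := by
    refine (Finset.sum_subset (by intro k hk; simp only [mem_range, mem_Ico] at *; omega) ?_).symm
    intro k hk hk2
    simp only [mem_range, mem_Ico, not_and, not_lt] at hk hk2
    have hka : k < a := by by_contra h; push_neg at h; exact absurd (hk2 h) (by omega)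
    rw [Nat.choose_eq_zero_of_lt hka, mul_zero]
  rw [h0, Finset.sum_Ico_eq_sum_range]
  have h2 : ∀ j ∈ range (n+1-a), n.choose (a+j) * (a+j).choose a
      = n.choose a * (n-a).choose j := by
    intro j hj
    simp only [mem_range] at hj
    rw [Nat.choose_mul (by omega)]
    congr 2
    omega
  rw [Finset.sum_congr rfl h2, ← Finset.mul_sum,
    show n+1-a = (n-a)+1 by omega, Nat.sum_range_choose]

lemma vdmAux (n k : ℕ) :
    (n+k).choose n = ∑ a ∈ range (k+1), n.choose a * k.choose a := by
  have h1 : (n+k).choose n = (n+k).choose k := by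
    rw [← Nat.choose_symm (Nat.le_add_right n k)]; congr 1; omega
  rw [h1, Nat.add_choose_eq, Finset.Nat.sum_antidiagonal_eq_sum_range_succ_mk]
  refine Finset.sum_congr rfl fun a hak => ?_
  simp only [mem_range] at hak
  rw [Nat.choose_symm (by omega)]

lemma keyIdAux (n : ℕ) :
    ∑ k ∈ range (n+1), (n+k).choose n * n.choose k
      = ∑ k ∈ range (n+1), n.choose k ^ 2 * 2 ^ k := by
  calc ∑ k ∈ range (n+1), (n+k).choose n * n.choose k
      = ∑ k ∈ range (n+1), ∑ a ∈ range (n+1), n.choose k * (n.choose a * k.choose a) := by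
        refine Finset.sum_congr rfl fun k hk => ?_
        simp only [mem_range] at hk
        rw [vdmAux]
        have hext : (∑ a ∈ range (k+1), n.choose a * k.choose a)
            = ∑ a ∈ range (n+1), n.choose a * k.choose a := by
          refine Finset.sum_subset (Finset.range_subset_range.mpr (by omega)) ?_
          intro a ha ha2
          simp only [mem_range, not_lt] at ha ha2
          rw [Nat.choose_eq_zero_of_lt (show k < a by omega), mul_zero]
        rw [hext, Finset.sum_mul]
        exact Finset.sum_congr rfl fun a _ => by ring
    _ = ∑ a ∈ range (n+1), n.choose a * ∑ k ∈ range (n+1), n.choose k * k.choose a := by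
        rw [Finset.sum_comm]
        refine Finset.sum_congr rfl fun a _ => ?_
        rw [Finset.mul_sum]
        refine Finset.sum_congr rfl fun k _ => by ring
    _ = ∑ a ∈ range (n+1), n.choose a ^2 * 2 ^ (n-a) := by
        refine Finset.sum_congr rfl fun a ha => ?_
        rw [innerSumAux n a (by simpa using Nat.lt_succ_iff.mp (mem_range.mp ha))]
        ring
    _ = ∑ k ∈ range (n+1), n.choose k ^ 2 * 2 ^ k := by
        rw [← Finset.sum_range_reflect]
        refine Finset.sum_congr rfl fun a ha => ?_
        simp only [mem_range] at ha
        rw [show n+1-1-a = n-a by omega, Nat.choose_symm (by omega),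
          show n - (n-a) = a by omega]


lemma bernVarAux (n : ℕ) (p : ℝ) :
    ∑ k ∈ range (n+1), ((n:ℝ)*p - k)^2 * (n.choose k * p^k * (1-p)^(n-k))
      = n * p * (1-p) := by
  have hB := bernsteinPolynomial.variance (R := ℝ) n
  have := congrArg (Polynomial.eval p) hB
  simpa [bernsteinPolynomial, Polynomial.eval_finset_sum, mul_comm, mul_assoc, mul_left_comm] using this

lemma varAux (n : ℕ) (x : ℝ) (hx : 0 < x) :
    ∑ k ∈ range (n+1), ((k:ℝ)*(1+x) - n*x)^2 * (n.choose k * x^k)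
      = n * x * (1+x)^n := by
  set s : ℝ := 1 + x with hs
  have hs0 : 0 < s := by positivity
  have hB := bernVarAux n (x/s)
  have h1p : 1 - x/s = 1/s := by field_simp; ring
  have := congrArg (fun z => z * s^(n+2)) hB
  simp only [h1p] at this
  rw [Finset.sum_mul] at this
  calc ∑ k ∈ range (n+1), ((k:ℝ)*s - n*x)^2 * (n.choose k * x^k)
      = ∑ k ∈ range (n+1), ((n:ℝ)*(x/s) - k)^2 * (n.choose k * (x/s)^k * (1/s)^(n-k)) * s^(n+2) := by
        refine Finset.sum_congr rfl fun k hk => ?_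
        simp only [mem_range] at hk
        have hkn : k ≤ n := by omega
        have e1 : ((n:ℝ)*(x/s) - k) = (n*x - k*s)/s := by field_simp
        have e2 : (x/s)^k = x^k/s^k := div_pow x s k
        have e3 : ((1:ℝ)/s)^(n-k) = s^k/s^n := by
          rw [div_pow, one_pow, div_eq_div_iff (by positivity) (by positivity), one_mul, ← pow_add]
          congr 1
          omega
        rw [e1, e2, e3]
        field_simp
        ring
    _ = n * (x/s) * (1/s) * s^(n+2) := this
    _ = n * x * s^n := by
        rw [show s^(n+2) = s^n * (s*s) by ring]
        field_simp


-- numeric facts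
lemma xFacts : (1.41:ℝ) ≤ Real.sqrt 2 ∧ Real.sqrt 2 ≤ 1.42 := by
  constructor
  · rw [show (1.41:ℝ) = Real.sqrt (1.41^2) from (Real.sqrt_sq (by norm_num)).symm]
    exact Real.sqrt_le_sqrt (by norm_num)
  · rw [show (1.42:ℝ) = Real.sqrt (1.42^2) from (Real.sqrt_sq (by norm_num)).symm]
    exact Real.sqrt_le_sqrt (by norm_num)

lemma sqrtnFacts (n : ℕ) (hn : 10000 ≤ n) :
    (100:ℝ) ≤ Real.sqrt n ∧ Real.sqrt n ≤ 0.01 * n ∧ Real.sqrt n * Real.sqrt n = n := by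
  have h1 : (100:ℝ) ≤ Real.sqrt n := by
    rw [show (100:ℝ) = Real.sqrt (100^2) from (Real.sqrt_sq (by norm_num)).symm]
    refine Real.sqrt_le_sqrt ?_
    have : (10000:ℝ) ≤ n := by exact_mod_cast hn
    norm_num
    linarith
  have h2 : Real.sqrt n * Real.sqrt n = n := Real.mul_self_sqrt (by positivity)
  exact ⟨h1, by nlinarith, h2⟩

lemma sumuAux (n : ℕ) (x : ℝ) :
    ∑ k ∈ range (n+1), ((n.choose k : ℝ) * x^k) = (1+x)^n := by
  rw [show (1:ℝ)+x = x+1 by ring, add_pow]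
  simp [mul_comm]


lemma lowerAux (n : ℕ) (hn : 10000 ≤ n) :
    (3+2*Real.sqrt 2)^n / (7 * Real.sqrt n) ≤ ∑ k ∈ range (n+1), (n.choose k:ℝ)^2 * 2^k := by
  set x : ℝ := Real.sqrt 2 with hxdef
  obtain ⟨hx1, hx2⟩ := xFacts
  obtain ⟨hq1, hq2, hq3⟩ := sqrtnFacts n hn
  have hx0 : 0 < x := by linarith
  have hxsq : x^2 = 2 := Real.sq_sqrt (by norm_num)
  set s : ℝ := 1 + x with hsdef
  have hs0 : (0:ℝ) < s := by linarith
  have hs2 : s^2 = 3 + 2*x := by rw [hsdef]; linear_combination hxsq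
  set u : ℕ → ℝ := fun k => (n.choose k : ℝ) * x^k with hudef
  have hu0 : ∀ k, 0 ≤ u k := fun k => by positivity
  have hsum : ∑ k ∈ range (n+1), u k = s^n := sumuAux n x
  have hvar : ∑ k ∈ range (n+1), ((k:ℝ)*s - n*x)^2 * u k = n * x * s^n := varAux n x hx0
  set c : ℕ := ⌊(n:ℝ)*x/s⌋₊ with hcdef
  set b : ℕ := ⌊Real.sqrt n⌋₊ with hbdef
  have hc1 : (c:ℝ) ≤ (n:ℝ)*x/s := Nat.floor_le (by positivity)
  have hc2 : (n:ℝ)*x/s < c + 1 := Nat.lt_floor_add_one _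
  have hb1 : (b:ℝ) ≤ Real.sqrt n := Nat.floor_le (by positivity)
  have hb2 : Real.sqrt n < b + 1 := Nat.lt_floor_add_one _
  have hn0 : (10000:ℝ) ≤ (n:ℝ) := by exact_mod_cast hn
  have hmu : (n:ℝ)*x/s ≤ 0.6 * n := by
    rw [div_le_iff₀ hs0]; nlinarith
  have hden : (0:ℝ) < s^2*(Real.sqrt n - 1)^2 := by nlinarith
  set W : Finset ℕ := Icc (c-b) (c+b) with hWdef
  have hWsub : W ⊆ range (n+1) := by
    intro k hk
    simp only [hWdef, mem_Icc, mem_range] at *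
    have h9 : (c:ℝ) + b ≤ 0.6*n + 0.01*n := by linarith
    have hcb : (c:ℝ) + (b:ℝ) < n := by linarith
    have : c + b < n := by exact_mod_cast hcb
    omega
  -- tail bound
  have htail : ∑ k ∈ range (n+1) \ W, u k ≤ 0.3 * s^n := by
    have hterm : ∀ k ∈ range (n+1) \ W,
        u k ≤ ((k:ℝ)*s - n*x)^2 * u k / (s^2*(Real.sqrt n - 1)^2) := by
      intro k hk
      simp only [mem_sdiff, mem_range, hWdef, mem_Icc, not_and, not_le] at hk
      obtain ⟨hkn, hkW⟩ := hk
      have hcases : k + b < c ∨ c + b < k := by omega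
      have hA0 : 0 ≤ s*(Real.sqrt n - 1) := mul_nonneg hs0.le (by linarith)
      have hsq : s^2*(Real.sqrt n - 1)^2 ≤ ((k:ℝ)*s - n*x)^2 := by
        rcases hcases with h | h
        · have hh : (k:ℝ) + b + 1 ≤ c := by exact_mod_cast h
          have h5 : (k:ℝ) ≤ (n:ℝ)*x/s - Real.sqrt n := by linarith
          have h6 : (k:ℝ)*s ≤ ((n:ℝ)*x/s - Real.sqrt n)*s :=
            mul_le_mul_of_nonneg_right h5 (le_of_lt hs0)
          have h8 : ((n:ℝ)*x/s - Real.sqrt n)*s = n*x - Real.sqrt n*s := by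
            field_simp
          have hA : s*(Real.sqrt n - 1) ≤ n*x - (k:ℝ)*s := by
            rw [h8] at h6; nlinarith [hs0]
          calc s^2*(Real.sqrt n - 1)^2 = (s*(Real.sqrt n - 1))^2 := by ring
            _ ≤ (n*x - (k:ℝ)*s)^2 := pow_le_pow_left₀ hA0 hA 2
            _ = ((k:ℝ)*s - n*x)^2 := by ring
        · have hh : (c:ℝ) + b + 1 ≤ k := by exact_mod_cast h
          have h5 : (n:ℝ)*x/s + (Real.sqrt n - 1) ≤ (k:ℝ) := by linarith
          have h6 : ((n:ℝ)*x/s + (Real.sqrt n - 1))*s ≤ (k:ℝ)*s :=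
            mul_le_mul_of_nonneg_right h5 (le_of_lt hs0)
          have h8 : ((n:ℝ)*x/s + (Real.sqrt n - 1))*s = n*x + (Real.sqrt n - 1)*s := by
            field_simp
          have hA : s*(Real.sqrt n - 1) ≤ (k:ℝ)*s - n*x := by
            rw [h8] at h6; nlinarith [hs0]
          calc s^2*(Real.sqrt n - 1)^2 = (s*(Real.sqrt n - 1))^2 := by ring
            _ ≤ ((k:ℝ)*s - n*x)^2 := pow_le_pow_left₀ hA0 hA 2
      rw [le_div_iff₀ hden, mul_comm (u k)]
      exact mul_le_mul_of_nonneg_right hsq (hu0 k)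
    calc ∑ k ∈ range (n+1) \ W, u k
        ≤ ∑ k ∈ range (n+1) \ W, ((k:ℝ)*s - n*x)^2 * u k / (s^2*(Real.sqrt n - 1)^2) :=
          Finset.sum_le_sum hterm
      _ ≤ ∑ k ∈ range (n+1), ((k:ℝ)*s - n*x)^2 * u k / (s^2*(Real.sqrt n - 1)^2) := by
          refine Finset.sum_le_sum_of_subset_of_nonneg (Finset.sdiff_subset) ?_
          intro k _ _
          have := hu0 k
          positivity
      _ = (n * x * s^n) / (s^2*(Real.sqrt n - 1)^2) := by
          rw [← Finset.sum_div, hvar]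
      _ ≤ 0.3 * s^n := by
          rw [div_le_iff₀ hden]
          have hsn : (0:ℝ) < s^n := by positivity
          have e1 : 0.98*(n:ℝ) ≤ (Real.sqrt n - 1)^2 := by nlinarith
          have k1 : (5.82:ℝ) ≤ s^2 := by nlinarith
          have k3 : 5.82*(0.98*(n:ℝ)) ≤ s^2*(Real.sqrt n - 1)^2 :=
            mul_le_mul k1 e1 (by positivity) (by positivity)
          have k4 : (n:ℝ)*x ≤ 1.42*n := by nlinarith
          have key : (n:ℝ)*x ≤ 0.3*(s^2*(Real.sqrt n - 1)^2) := by nlinarith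
          nlinarith [mul_le_mul_of_nonneg_right key (le_of_lt hsn)]
  have hWsum : 0.7 * s^n ≤ ∑ k ∈ W, u k := by
    have hsp := Finset.sum_sdiff_eq_sub hWsub (f := u)
    have hsplit : ∑ k ∈ W, u k = s^n - ∑ k ∈ range (n+1) \ W, u k := by
      rw [hsp, hsum]; ring
    rw [hsplit]; linarith
  -- Cauchy-Schwarz
  have hCS : (∑ k ∈ W, u k)^2 ≤ (W.card : ℝ) * ∑ k ∈ W, (u k)^2 :=
    sq_sum_le_card_mul_sum_sq
  have hcard : (W.card : ℝ) ≤ 3 * Real.sqrt n := by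
    have h1 : W.card ≤ 2*b+1 := by
      rw [hWdef, Nat.card_Icc]; omega
    have h2 : ((2*b+1 : ℕ):ℝ) ≤ 3 * Real.sqrt n := by
      push_cast; nlinarith
    calc (W.card : ℝ) ≤ ((2*b+1:ℕ):ℝ) := by exact_mod_cast h1
      _ ≤ 3 * Real.sqrt n := h2
  have husq : ∀ k, (u k)^2 = (n.choose k:ℝ)^2 * 2^k := by
    intro k
    rw [hudef]
    simp only
    rw [mul_pow, ← pow_mul, mul_comm k 2, pow_mul, hxsq]
  have hsub : ∑ k ∈ W, (u k)^2 ≤ ∑ k ∈ range (n+1), (n.choose k:ℝ)^2 * 2^k := by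
    calc ∑ k ∈ W, (u k)^2 ≤ ∑ k ∈ range (n+1), (u k)^2 :=
          Finset.sum_le_sum_of_subset_of_nonneg hWsub (fun k _ _ => by positivity)
      _ = ∑ k ∈ range (n+1), (n.choose k:ℝ)^2 * 2^k :=
          Finset.sum_congr rfl fun k _ => husq k
  set Dr : ℝ := ∑ k ∈ range (n+1), (n.choose k:ℝ)^2 * 2^k with hDrdef
  have hDr0 : 0 ≤ Dr := by
    rw [hDrdef]; exact Finset.sum_nonneg fun k _ => by positivity
  have hfinal : (0.7 * s^n)^2 ≤ 3 * Real.sqrt n * Dr := by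
    calc (0.7 * s^n)^2 ≤ (∑ k ∈ W, u k)^2 :=
          pow_le_pow_left₀ (by positivity) hWsum 2
      _ ≤ (W.card : ℝ) * ∑ k ∈ W, (u k)^2 := hCS
      _ ≤ 3 * Real.sqrt n * Dr := by
          have hnn : (0:ℝ) ≤ ∑ k ∈ W, (u k)^2 := Finset.sum_nonneg fun k _ => by positivity
          exact mul_le_mul hcard hsub hnn (by positivity)
  rw [div_le_iff₀ (by positivity)]
  have halpha : (3+2*x)^n = (s^n)^2 := by
    rw [← hs2, ← pow_mul, mul_comm, pow_mul]
  rw [halpha]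
  nlinarith [hfinal, mul_nonneg (Real.sqrt_nonneg (n:ℝ)) hDr0]


lemma expAux (t : ℝ) (h0 : 0 ≤ t) (h1 : t ≤ 1/2) : Real.exp (-(2*t)) ≤ 1 - t := by
  have h2 : 1 + 2*t ≤ Real.exp (2*t) := by
    have := Real.add_one_le_exp (2*t)
    linarith
  have h3 : (0:ℝ) < Real.exp (2*t) := Real.exp_pos _
  have h4 : Real.exp (-(2*t)) = 1 / Real.exp (2*t) := by
    rw [Real.exp_neg]; ring
  rw [h4, div_le_iff₀ h3]
  nlinarith

lemma upperAux (n : ℕ) (hn : 10000 ≤ n) :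
    ∑ k ∈ range (n+1), (n.choose k:ℝ)^2 * 2^k
      ≤ Real.exp 30 * (3+2*Real.sqrt 2)^n / Real.sqrt n := by
  classical
  set x : ℝ := Real.sqrt 2 with hxdef
  obtain ⟨hx1, hx2⟩ := xFacts
  obtain ⟨hq1, hq2, hq3⟩ := sqrtnFacts n hn
  have hx0 : 0 < x := by linarith
  have hxsq : x^2 = 2 := Real.sq_sqrt (by norm_num)
  set s : ℝ := 1 + x with hsdef
  have hs0 : (0:ℝ) < s := by linarith
  have hs2 : s^2 = 3 + 2*x := by rw [hsdef]; linear_combination hxsq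
  set u : ℕ → ℝ := fun k => (n.choose k : ℝ) * x^k with hudef
  have hu0 : ∀ k, 0 ≤ u k := fun k => by positivity
  have hsum : ∑ k ∈ range (n+1), u k = s^n := sumuAux n x
  have hn0 : (10000:ℝ) ≤ (n:ℝ) := by exact_mod_cast hn
  set b : ℕ := ⌊Real.sqrt n⌋₊ with hbdef
  have hb1 : (b:ℝ) ≤ Real.sqrt n := Nat.floor_le (by positivity)
  have hb2 : Real.sqrt n < b + 1 := Nat.lt_floor_add_one _
  -- the mode
  have hex : ∃ k : ℕ, x*((n:ℝ)-k) < k+1 := ⟨n, by simp; positivity⟩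
  set m : ℕ := Nat.find hex with hmdef
  have hm : x*((n:ℝ)-m) < m+1 := Nat.find_spec hex
  have hmin : ∀ k, k < m → (k:ℝ)+1 ≤ x*((n:ℝ)-k) := by
    intro k hk
    have := Nat.find_min hex hk
    push_neg at this
    exact this
  have hm1 : 1 ≤ m := by
    by_contra h
    push_neg at h
    interval_cases m
    · simp at hm; nlinarith
  -- location of m
  have hA : (m:ℝ) ≤ x*((n:ℝ)-m+1) := by
    have h := hmin (m-1) (by omega)
    have hc : ((m-1:ℕ):ℝ) = (m:ℝ)-1 := by
      have : (1:ℕ) ≤ m := hm1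
      push_cast [Nat.cast_sub this]
      ring
    rw [hc] at h
    linarith
  have hmlow : 0.5*(n:ℝ) ≤ m := by nlinarith
  have hmhigh : (m:ℝ) ≤ 0.59*(n:ℝ) + 0.59 := by nlinarith
  have hmbn : m + b ≤ n := by
    have : (m:ℝ) + (b:ℝ) < n := by nlinarith
    exact_mod_cast this.le
  -- ratio identity
  have hratio : ∀ k, k < n → u (k+1) * ((k:ℝ)+1) = u k * (x*((n:ℝ)-k)) := by
    intro k hk
    have hcc := Nat.choose_succ_right_eq n k
    have hcr : ((n.choose (k+1) : ℕ):ℝ) * ((k:ℝ)+1) = (n.choose k : ℝ) * ((n:ℝ)-k) := by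
      have := congrArg (Nat.cast : ℕ → ℝ) hcc
      push_cast at this
      rw [Nat.cast_sub hk.le] at this
      push_cast at this
      linarith [this]
    rw [hudef]
    simp only
    calc (n.choose (k+1) : ℝ) * x^(k+1) * ((k:ℝ)+1)
        = ((n.choose (k+1) : ℝ) * ((k:ℝ)+1)) * x^(k+1) := by ring
      _ = ((n.choose k : ℝ) * ((n:ℝ)-k)) * x^(k+1) := by rw [hcr]
      _ = (n.choose k : ℝ) * x^k * (x*((n:ℝ)-k)) := by rw [pow_succ]; ring
  -- u is maximized at m
  have hup : ∀ k, k < m → u k ≤ u (k+1) := by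
    intro k hk
    have hkn : k < n := by
      have : (m:ℝ) ≤ n := by nlinarith
      have hmn : m ≤ n := by exact_mod_cast this
      omega
    have hr := hratio k hkn
    have hge := hmin k hk
    have hkpos : (0:ℝ) < (k:ℝ)+1 := by positivity
    nlinarith [hu0 k, hu0 (k+1)]
  have hdown : ∀ k, m ≤ k → k < n → u (k+1) ≤ u k := by
    intro k hmk hkn
    have hr := hratio k hkn
    have hkm : (m:ℝ) ≤ (k:ℝ) := by exact_mod_cast hmk
    have hle : x*((n:ℝ)-k) ≤ (k:ℝ)+1 := by nlinarith
    have hkpos : (0:ℝ) < (k:ℝ)+1 := by positivity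
    nlinarith [hu0 k, hu0 (k+1)]
  have hmn : m ≤ n := by omega
  have hmax : ∀ k, k ≤ n → u k ≤ u m := by
    have Hup : ∀ d k, k + d ≤ m → u k ≤ u (k+d) := by
      intro d
      induction d with
      | zero => intro k _; simp
      | succ d ih =>
        intro k h
        calc u k ≤ u (k+d) := ih k (by omega)
          _ ≤ u (k+d+1) := hup (k+d) (by omega)
    have Hdown : ∀ d, m + d ≤ n → u (m+d) ≤ u m := by
      intro d
      induction d with
      | zero => simp
      | succ d ih =>
        intro h
        calc u (m+d+1) ≤ u (m+d) := hdown (m+d) (by omega) (by omega)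
          _ ≤ u m := ih (by omega)
    intro k hk
    rcases le_or_gt k m with h | h
    · have := Hup (m-k) k (by omega)
      rwa [show k+(m-k) = m by omega] at this
    · have := Hdown (k-m) (by omega)
      rwa [show m+(k-m) = k by omega] at this
  -- window lower bound
  set δ : ℝ := 15 / Real.sqrt n with hδdef
  have hδ0 : 0 < δ := by positivity
  have hδh : δ ≤ 0.15 := by
    rw [hδdef, div_le_iff₀ (by positivity)]
    nlinarith
  set rr : ℝ := 1 - δ with hrrdef
  have hrr0 : 0 < rr := by rw [hrrdef]; linarith
  have hwin : ∀ j, j ≤ b → rr^j * u m ≤ u (m+j) := by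
    intro j hj
    induction j with
    | zero => simp
    | succ j ih =>
      have hj' : j ≤ b := by omega
      have ih' := ih hj'
      have hkn : m + j < n := by omega
      have hr := hratio (m+j) hkn
      -- ratio ≥ rr
      have hxnm : (m:ℝ) - x ≤ x*((n:ℝ)-m) := by nlinarith
      have hjb : (j:ℝ)+1 ≤ Real.sqrt n := by
        have : (j:ℝ)+1 ≤ (b:ℝ) := by exact_mod_cast Nat.succ_le_of_lt (by omega)
        linarith
      have hrge : rr*((m:ℝ)+(j:ℝ)+1) ≤ x*((n:ℝ)-((m:ℝ)+(j:ℝ))) := by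
        have e3 : 7.5*Real.sqrt n ≤ δ*(m:ℝ) := by
          have h1 : (15/Real.sqrt n)*(0.5*(n:ℝ)) ≤ δ*m := by
            rw [hδdef]
            exact mul_le_mul_of_nonneg_left hmlow (by positivity)
          have h2 : (15/Real.sqrt n)*(0.5*(n:ℝ)) = 7.5*Real.sqrt n := by
            rw [div_mul_eq_mul_div, div_eq_iff (by positivity)]
            nlinarith [hq3]
          linarith
        have e2 : δ*(m:ℝ) ≤ δ*((m:ℝ)+j+1) := by
          have hj0 : (0:ℝ) ≤ (j:ℝ) := Nat.cast_nonneg j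
          have : (m:ℝ) ≤ (m:ℝ)+j+1 := by linarith
          exact mul_le_mul_of_nonneg_left this hδ0.le
        have e4 : (1+x)*((j:ℝ)+1) ≤ 2.42*Real.sqrt n := by
          have := mul_le_mul (show (1:ℝ)+x ≤ 2.42 by linarith) hjb (by positivity)
            (by norm_num : (0:ℝ) ≤ 2.42)
          linarith
        have e5 : rr*((m:ℝ)+(j:ℝ)+1) = ((m:ℝ)+j+1) - δ*((m:ℝ)+j+1) := by
          rw [hrrdef]; ring
        have e6 : x*((n:ℝ)-((m:ℝ)+(j:ℝ))) = x*((n:ℝ)-m) - x*(j:ℝ) := by ring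
        rw [e5, e6]
        linarith only [hxnm, e2, e3, e4, hjb, hx1, hx2]
      have hP : (0:ℝ) < (m:ℝ)+(j:ℝ)+1 := by positivity
      have hr' : u (m+j+1) * ((m:ℝ)+(j:ℝ)+1) = u (m+j) * (x*((n:ℝ)-((m:ℝ)+(j:ℝ)))) := by
        have := hratio (m+j) hkn
        push_cast at this
        convert this using 2 <;> push_cast <;> ring
      have h1 : u (m+j) * (rr*((m:ℝ)+(j:ℝ)+1)) ≤ u (m+j) * (x*((n:ℝ)-((m:ℝ)+(j:ℝ)))) :=
        mul_le_mul_of_nonneg_left hrge (hu0 _)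
      have h2 : rr^j * u m * (rr*((m:ℝ)+(j:ℝ)+1)) ≤ u (m+j) * (rr*((m:ℝ)+(j:ℝ)+1)) :=
        mul_le_mul_of_nonneg_right ih' (by positivity)
      have h3 : rr^(j+1) * u m * ((m:ℝ)+(j:ℝ)+1) ≤ u (m+j+1) * ((m:ℝ)+(j:ℝ)+1) := by
        rw [hr']
        calc rr^(j+1) * u m * ((m:ℝ)+(j:ℝ)+1) = (rr^j * u m) * (rr*((m:ℝ)+(j:ℝ)+1)) := by ring
          _ ≤ u (m+j) * (rr*((m:ℝ)+(j:ℝ)+1)) := h2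
          _ ≤ u (m+j) * (x*((n:ℝ)-((m:ℝ)+(j:ℝ)))) := h1
      have h4 := le_of_mul_le_mul_right h3 hP
      rwa [show m+(j+1) = m+j+1 from rfl]
  -- sum over window
  have hIccsub : Icc m (m+b) ⊆ range (n+1) := by
    intro k hk
    simp only [mem_Icc, mem_range] at *
    omega
  have hreidx : ∑ k ∈ Icc m (m+b), u k = ∑ j ∈ range (b+1), u (m+j) := by
    rw [← Finset.Ico_add_one_right_eq_Icc, Finset.sum_Ico_eq_sum_range,
      show m+b+1-m = b+1 from by omega]
  have h4 : ∑ j ∈ range (b+1), u (m+j) ≤ s^n := by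
    rw [← hreidx, ← hsum]
    exact Finset.sum_le_sum_of_subset_of_nonneg hIccsub (fun k _ _ => hu0 k)
  have h5 : ((b:ℝ)+1) * (rr^b * u m) ≤ ∑ j ∈ range (b+1), u (m+j) := by
    have hterm : ∀ j ∈ range (b+1), rr^b * u m ≤ u (m+j) := by
      intro j hj
      have hjb : j ≤ b := by simpa [Nat.lt_succ_iff] using mem_range.mp hj
      have hp1 : rr^b ≤ rr^j := pow_le_pow_of_le_one hrr0.le (by rw [hrrdef]; linarith) hjb
      calc rr^b * u m ≤ rr^j * u m := mul_le_mul_of_nonneg_right hp1 (hu0 m)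
        _ ≤ u (m+j) := hwin j hjb
    calc ((b:ℝ)+1) * (rr^b * u m) = ∑ _j ∈ range (b+1), rr^b * u m := by
          rw [Finset.sum_const, Finset.card_range]; push_cast; ring
      _ ≤ ∑ j ∈ range (b+1), u (m+j) := Finset.sum_le_sum hterm
  -- exp bound on rr^b
  have hδb : δ*(b:ℝ) ≤ 15 := by
    rw [hδdef, div_mul_eq_mul_div, div_le_iff₀ (by positivity)]
    linarith only [hb1]
  have hrb : Real.exp (-(30:ℝ)) ≤ rr^b := by
    have ha : Real.exp (-(30:ℝ)) ≤ Real.exp (-(2*δ*(b:ℝ))) := by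
      apply Real.exp_le_exp.mpr
      linarith only [hδb]
    have hb3 : Real.exp (-(2*δ*(b:ℝ))) = Real.exp (-(2*δ))^b := by
      rw [← Real.exp_nat_mul]
      congr 1
      ring
    have hc3 : Real.exp (-(2*δ))^b ≤ rr^b :=
      pow_le_pow_left₀ (Real.exp_pos _).le (expAux δ hδ0.le (by linarith)) b
    calc Real.exp (-(30:ℝ)) ≤ Real.exp (-(2*δ*(b:ℝ))) := ha
      _ = Real.exp (-(2*δ))^b := hb3
      _ ≤ rr^b := hc3
  have h6 : Real.sqrt n * (Real.exp (-(30:ℝ)) * u m) ≤ s^n := by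
    have a1 : Real.sqrt n * (Real.exp (-(30:ℝ)) * u m) ≤ ((b:ℝ)+1) * (rr^b * u m) := by
      apply mul_le_mul (by linarith) (mul_le_mul_of_nonneg_right hrb (hu0 m)) (by positivity)
        (by positivity)
    linarith
  have hum : u m ≤ Real.exp 30 * s^n / Real.sqrt n := by
    rw [le_div_iff₀ (by positivity)]
    have e30 : (0:ℝ) < Real.exp 30 := Real.exp_pos _
    rw [Real.exp_neg] at h6
    calc u m * Real.sqrt n = (Real.sqrt n * ((Real.exp 30)⁻¹ * u m)) * Real.exp 30 := by
          field_simp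
      _ ≤ s^n * Real.exp 30 := mul_le_mul_of_nonneg_right h6 e30.le
      _ = Real.exp 30 * s^n := mul_comm _ _
  -- conclude
  have husq : ∀ k, (n.choose k:ℝ)^2 * 2^k = (u k)^2 := by
    intro k
    rw [hudef]
    simp only
    rw [mul_pow, ← pow_mul, mul_comm k 2, pow_mul, hxsq]
  have hDle : ∑ k ∈ range (n+1), (n.choose k:ℝ)^2 * 2^k ≤ u m * s^n := by
    calc ∑ k ∈ range (n+1), (n.choose k:ℝ)^2 * 2^k
        = ∑ k ∈ range (n+1), (u k)^2 := Finset.sum_congr rfl fun k _ => husq k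
      _ ≤ ∑ k ∈ range (n+1), u m * u k := by
          refine Finset.sum_le_sum fun k hk => ?_
          have hkn : k ≤ n := by simpa [Nat.lt_succ_iff] using mem_range.mp hk
          have := mul_le_mul_of_nonneg_right (hmax k hkn) (hu0 k)
          calc (u k)^2 = u k * u k := sq (u k) ▸ by ring
            _ ≤ u m * u k := this
      _ = u m * ∑ k ∈ range (n+1), u k := by rw [Finset.mul_sum]
      _ = u m * s^n := by rw [hsum]
  have halpha : (3+2*x)^n = (s^n)^2 := by
    rw [← hs2, ← pow_mul, mul_comm, pow_mul]
  calc ∑ k ∈ range (n+1), (n.choose k:ℝ)^2 * 2^k ≤ u m * s^n := hDle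
    _ ≤ (Real.exp 30 * s^n / Real.sqrt n) * s^n :=
        mul_le_mul_of_nonneg_right hum (by positivity)
    _ = Real.exp 30 * ((s^n)^2) / Real.sqrt n := by ring
    _ = Real.exp 30 * (3+2*x)^n / Real.sqrt n := by rw [halpha]


theorem stmt_18 :
    ∃ c₁ c₂ : ℝ, 0 < c₁ ∧ c₁ < c₂ ∧ ∃ N : ℕ, ∀ n : ℕ, N ≤ n →
      c₁ * (3 + 2 * Real.sqrt 2) ^ n / Real.sqrt n ≤ (T n : ℝ) ∧
      (T n : ℝ) ≤ c₂ * (3 + 2 * Real.sqrt 2) ^ n / Real.sqrt n := by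
  refine ⟨1/30, Real.exp 30, by norm_num, ?_, 10000, ?_⟩
  · have := Real.add_one_le_exp (30:ℝ)
    linarith
  intro n hn
  have hn1 : 1 ≤ n := by omega
  set S : ℕ := ∑ i ∈ Icc 1 n, (n + i).choose n * n.choose i with hSdef
  -- nat identity
  have hsplit : range (n+1) = insert 0 (Icc 1 n) := by
    ext k; simp only [mem_range, mem_insert, mem_Icc]; omega
  have hid : ∑ k ∈ range (n+1), n.choose k ^ 2 * 2 ^ k = 1 + S := by
    rw [← keyIdAux, hsplit, Finset.sum_insert (by simp)]
    simp [Nat.choose_self]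
    rfl
  -- S is at least n*(n+1)
  have hSbig : 3 ≤ S := by
    have h1 : (n+1).choose n * n.choose 1 ≤ S := by
      refine Finset.single_le_sum (f := fun i => (n+i).choose n * n.choose i) ?_ ?_
      · intro i _; positivity
      · simp only [mem_Icc]; omega
    have h2 : (n+1).choose n = n+1 := by
      rw [← Nat.choose_symm (by omega)]
      simp
    rw [h2, Nat.choose_one_right] at h1
    nlinarith
  set Dn : ℝ := ∑ k ∈ range (n+1), (n.choose k:ℝ)^2 * 2^k with hDndef
  have hcast : Dn = (1:ℝ) + (S:ℝ) := by
    rw [hDndef]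
    have : ((∑ k ∈ range (n+1), n.choose k ^ 2 * 2 ^ k : ℕ) : ℝ)
        = ∑ k ∈ range (n+1), (n.choose k:ℝ)^2 * 2^k := by push_cast; rfl
    rw [← this, hid]
    push_cast
    ring
  have hlow := lowerAux n hn
  have hupp := upperAux n hn
  set P : ℝ := (3 + 2*Real.sqrt 2)^n / Real.sqrt n with hPdef
  have hP0 : 0 ≤ P := by
    rw [hPdef]
    have h2 : (0:ℝ) ≤ Real.sqrt 2 := Real.sqrt_nonneg 2
    positivity
  have hlow' : P/7 ≤ Dn := by
    have : (3+2*Real.sqrt 2)^n / (7 * Real.sqrt n) = P/7 := by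
      rw [hPdef]; ring
    rw [← this]; exact hlow
  have hupp' : Dn ≤ Real.exp 30 * P := by
    have : Real.exp 30 * (3+2*Real.sqrt 2)^n / Real.sqrt n = Real.exp 30 * P := by
      rw [hPdef]; ring
    rw [← this]; exact hupp
  have hDn4 : (4:ℝ) ≤ Dn := by
    rw [hcast]
    have : (3:ℝ) ≤ (S:ℝ) := by exact_mod_cast hSbig
    linarith
  -- T bounds
  have hTnat1 : 2 * T n ≤ S := by
    rw [hSdef, T]
    omega
  have hTnat2 : S ≤ 2 * T n + 1 := by
    rw [hSdef, T]
    omega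
  have hT1 : 2 * (T n : ℝ) ≤ (S:ℝ) := by exact_mod_cast hTnat1
  have hT2 : (S:ℝ) ≤ 2 * (T n : ℝ) + 1 := by exact_mod_cast hTnat2
  have hgoal1 : (1/30 : ℝ) * (3 + 2*Real.sqrt 2)^n / Real.sqrt n = (1/30) * P := by
    rw [hPdef]; ring
  have hgoal2 : Real.exp 30 * (3 + 2*Real.sqrt 2)^n / Real.sqrt n = Real.exp 30 * P := by
    rw [hPdef]; ring
  have hexpP : 0 ≤ Real.exp 30 * P := mul_nonneg (Real.exp_pos 30).le hP0
  constructor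
  · rw [hgoal1]
    linarith
  · rw [hgoal2]
    linarith
end
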